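/- Let a = ±√(1/3). The 4×4 matrix with rows (0, -a, a, a), (-a, 0, -a, a), (a, a, 0, a), (-a, a, a, 0) is a special orthogonal matrix with zero diagonal. -/

import Mathlib

open Matrix

theorem stmt8 (a : ℝ) (ha : a = Real.sqrt (1/3) ∨ a = -Real.sqrt (1/3)) :
    let M : Matrix (Fin 4) (Fin 4) ℝ :=
      !![0, -a, a, a; -a, 0, -a, a; a, a, 0, a; -a, a, a, 0]
    Mᵀ * M = 1 ∧ M.det = 1 ∧ ∀ i : Fin 4, M i i = 0 := by
  have ha2 : a ^ 2 = 1 / 3 := by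
    rcases ha with h | h <;> subst h <;>
      simp [neg_pow, Real.sq_sqrt (by norm_num : (1:ℝ)/3 ≥ 0)]
  intro M
  refine ⟨?_, ?_, ?_⟩
  · ext i j
    fin_cases i <;> fin_cases j <;>
      simp [M, Matrix.mul_apply, Fin.sum_univ_four, Matrix.one_apply,
        Matrix.transpose_apply, Matrix.vecHead, Matrix.vecTail] <;> nlinarith [ha2]
  · have : M.det = 9 * (a^2)^2 := by
      simp [M, Matrix.det_succ_row_zero, Fin.sum_univ_succ, Fin.succAbove, show (Fin.castSucc 2 : Fin 4) = 2 from rfl]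
      ring
    rw [this, ha2]; norm_num
  · intro i; fin_cases i <;> simp [M]
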